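/- (Error bound on the optimal value of the approximate bi-attribute UPRO problem; the instance of Theorem 5.2(i) for simple ψ, as in the Example following Theorem 5.2.) Let Z be a nonempty set, K a positive integer, p₁,…,p_K ≥ 0 with Σ_k p_k = 1, and for each k let f_k : Z → T be a map into T. Assume 𝒰_N^c is nonempty. Define ϑ := sup_{z ∈ Z} inf_{u ∈ 𝒰^c} Σ_{k=1}^K p_k u(f_k(z)) and ϑ_N := sup_{z ∈ Z} inf_{u ∈ 𝒰_N^c} Σ_{k=1}^K p_k u(f_k(z)). Then |ϑ − ϑ_N| ≤ 3L(β₁ + β₂), where β₁ := max_{1≤i≤N₁−1}(x_{i+1}−x_i) and β₂ := max_{1≤j≤N₂−1}(y_{j+1}−y_j). -/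

import Mathlib

open Finset Set
open scoped Classical

noncomputable section

/-- Lower-triangle linear piece of the Type-1 PLA over cell `(i,j)`. -/
def u1l (x y : ℕ → ℝ) (u : ℕ → ℕ → ℝ) (i j : ℕ) (p q : ℝ) : ℝ :=
  ((x (i + 1) - p) / (x (i + 1) - x i)) * u i j
    + ((p - x i) / (x (i + 1) - x i) - (q - y j) / (y (j + 1) - y j)) * u (i + 1) j
    + ((q - y j) / (y (j + 1) - y j)) * u (i + 1) (j + 1)

/-- Upper-triangle linear piece of the Type-1 PLA over cell `(i,j)`. -/
def u1u (x y : ℕ → ℝ) (u : ℕ → ℕ → ℝ) (i j : ℕ) (p q : ℝ) : ℝ :=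
  ((y (j + 1) - q) / (y (j + 1) - y j)) * u i j
    + ((q - y j) / (y (j + 1) - y j) - (p - x i) / (x (i + 1) - x i)) * u i (j + 1)
    + ((p - x i) / (x (i + 1) - x i)) * u (i + 1) (j + 1)

/-- Membership in the half-open interval `X_i` (closed at the left end for `i = 1`). -/
def memX (x : ℕ → ℝ) (i : ℕ) (p : ℝ) : Prop :=
  if i = 1 then x 1 ≤ p ∧ p ≤ x 2 else x i < p ∧ p ≤ x (i + 1)

/-- Membership in the cell `T_{i,j} = X_i × Y_j`. -/
def memCell (x y : ℕ → ℝ) (i j : ℕ) (p q : ℝ) : Prop :=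
  memX x i p ∧ memX y j q

/-- The Type-1 piecewise linear function built from the grid values `u i j`. -/
def uPL (N₁ N₂ : ℕ) (x y : ℕ → ℝ) (u : ℕ → ℕ → ℝ) (p q : ℝ) : ℝ :=
  ∑ i ∈ Finset.Icc 1 (N₁ - 1), ∑ j ∈ Finset.Icc 1 (N₂ - 1),
    if memCell x y i j p q then
      (if (q - y j) * (x (i + 1) - x i) ≤ (p - x i) * (y (j + 1) - y j)
        then u1l x y u i j p q else u1u x y u i j p q)
    else 0


/-- Membership in the class `𝒰`: continuous, componentwise non-decreasing, `[0,1]`-valued,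
normalized utility functions on `T` satisfying the conservative property and ℓ¹-Lipschitz
continuity with modulus `L`. -/
def memU (N₁ N₂ : ℕ) (x y : ℕ → ℝ) (L : ℝ) (u : ℝ → ℝ → ℝ) : Prop :=
  ContinuousOn (fun pq : ℝ × ℝ => u pq.1 pq.2)
      (Set.Icc (x 1) (x N₁) ×ˢ Set.Icc (y 1) (y N₂)) ∧
  (∀ p p' q q', p ∈ Set.Icc (x 1) (x N₁) → p' ∈ Set.Icc (x 1) (x N₁) →
    q ∈ Set.Icc (y 1) (y N₂) → q' ∈ Set.Icc (y 1) (y N₂) →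
    p ≤ p' → q ≤ q' → u p q ≤ u p' q') ∧
  (∀ p ∈ Set.Icc (x 1) (x N₁), ∀ q ∈ Set.Icc (y 1) (y N₂), u p q ∈ Set.Icc (0 : ℝ) 1) ∧
  u (x 1) (y 1) = 0 ∧ u (x N₁) (y N₂) = 1 ∧
  (∀ a b c d : ℝ, x 1 ≤ a → a ≤ b → b ≤ x N₁ → y 1 ≤ c → c ≤ d → d ≤ y N₂ →
    u a c + u b d ≤ u a d + u b c) ∧
  (∀ p p' q q', p ∈ Set.Icc (x 1) (x N₁) → p' ∈ Set.Icc (x 1) (x N₁) →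
    q ∈ Set.Icc (y 1) (y N₂) → q' ∈ Set.Icc (y 1) (y N₂) →
    |u p q - u p' q'| ≤ L * (|p - p'| + |q - q'|))

/-- Membership in the ambiguity set `𝒰^c`: members of `𝒰` satisfying the linear gridpoint
constraints (the form taken by the Lebesgue–Stieltjes constraints when each `ψ_l` is a simple
function constant on the cells). -/
def memUc (N₁ N₂ M : ℕ) (x y : ℕ → ℝ) (L : ℝ) (a : ℕ → ℕ → ℕ → ℝ) (c : ℕ → ℝ)
    (u : ℝ → ℝ → ℝ) : Prop :=
  memU N₁ N₂ x y L u ∧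
  ∀ l ∈ Finset.Icc 1 M,
    ∑ i ∈ Finset.Icc 1 N₁, ∑ j ∈ Finset.Icc 1 N₂, a l i j * u (x i) (y j) ≤ c l

/-- Membership in `𝒰_N^c`: members of `𝒰^c` that coincide on `T` with the Type-1 piecewise
linear function built from their own gridpoint values. -/
def memUNc (N₁ N₂ M : ℕ) (x y : ℕ → ℝ) (L : ℝ) (a : ℕ → ℕ → ℕ → ℝ) (c : ℕ → ℝ)
    (u : ℝ → ℝ → ℝ) : Prop :=
  memUc N₁ N₂ M x y L a c u ∧
  ∀ p ∈ Set.Icc (x 1) (x N₁), ∀ q ∈ Set.Icc (y 1) (y N₂),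
    u p q = uPL N₁ N₂ x y (fun i j => u (x i) (y j)) p q


/-- barycentric lower-triangle affine function -/
def tl (A B C : ℝ) (s t : ℝ) : ℝ := (1-s)*A + (s-t)*B + t*C
/-- barycentric upper-triangle affine function -/
def tu (A E C : ℝ) (s t : ℝ) : ℝ := (1-t)*A + (t-s)*E + s*C
/-- barycentric cell max -/
def cm (A B E C : ℝ) (s t : ℝ) : ℝ := max (tl A B C s t) (tu A E C s t)

section scalars
variable {A B E C s t s' t' K : ℝ}

lemma tu_le_tl (hD : A + C ≤ E + B) (h : t ≤ s) : tu A E C s t ≤ tl A B C s t := by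
  unfold tl tu; nlinarith [mul_nonneg (sub_nonneg.2 h) (sub_nonneg.2 hD)]

lemma tl_le_tu (hD : A + C ≤ E + B) (h : s ≤ t) : tl A B C s t ≤ tu A E C s t := by
  unfold tl tu; nlinarith [mul_nonneg (sub_nonneg.2 h) (sub_nonneg.2 hD)]

lemma cm_eq_tl (hD : A + C ≤ E + B) (h : t ≤ s) : cm A B E C s t = tl A B C s t :=
  max_eq_left (tu_le_tl hD h)

lemma cm_eq_tu (hD : A + C ≤ E + B) (h : s ≤ t) : cm A B E C s t = tu A E C s t :=
  max_eq_right (tl_le_tu hD h)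

lemma cm_mono_s (hAB : A ≤ B) (hEC : E ≤ C) (h : s ≤ s') :
    cm A B E C s t ≤ cm A B E C s' t := by
  refine max_le_max ?_ ?_ <;> simp only [tl, tu] <;>
    nlinarith [mul_nonneg (sub_nonneg.2 h) (sub_nonneg.2 hAB),
      mul_nonneg (sub_nonneg.2 h) (sub_nonneg.2 hEC)]

lemma cm_mono_t (hBC : B ≤ C) (hAE : A ≤ E) (h : t ≤ t') :
    cm A B E C s t ≤ cm A B E C s t' := by
  refine max_le_max ?_ ?_ <;> simp only [tl, tu] <;>
    nlinarith [mul_nonneg (sub_nonneg.2 h) (sub_nonneg.2 hBC),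
      mul_nonneg (sub_nonneg.2 h) (sub_nonneg.2 hAE)]

lemma cm_lip_s (hBA : B - A ≤ K) (hCE : C - E ≤ K) (h : s ≤ s') :
    cm A B E C s' t - cm A B E C s t ≤ (s' - s) * K := by
  have h1 : tl A B C s' t ≤ tl A B C s t + (s' - s) * K := by
    unfold tl; nlinarith [mul_nonneg (sub_nonneg.2 h) (sub_nonneg.2 hBA)]
  have h2 : tu A E C s' t ≤ tu A E C s t + (s' - s) * K := by
    unfold tu; nlinarith [mul_nonneg (sub_nonneg.2 h) (sub_nonneg.2 hCE)]
  have h3 : cm A B E C s' t ≤ max (tl A B C s t + (s'-s)*K) (tu A E C s t + (s'-s)*K) :=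
    max_le_max h1 h2
  rw [max_add_add_right] at h3
  have : max (tl A B C s t) (tu A E C s t) = cm A B E C s t := rfl
  linarith [h3, this ▸ h3]


lemma cm_lip_t {A B E C s t t' K : ℝ} (hCB : C - B ≤ K) (hEA : E - A ≤ K) (h : t ≤ t') :
    cm A B E C s t' - cm A B E C s t ≤ (t' - t) * K := by
  have h1 : tl A B C s t' ≤ tl A B C s t + (t' - t) * K := by
    unfold tl; nlinarith [mul_nonneg (sub_nonneg.2 h) (sub_nonneg.2 hCB)]
  have h2 : tu A E C s t' ≤ tu A E C s t + (t' - t) * K := by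
    unfold tu; nlinarith [mul_nonneg (sub_nonneg.2 h) (sub_nonneg.2 hEA)]
  have h3 : cm A B E C s t' ≤ max (tl A B C s t + (t'-t)*K) (tu A E C s t + (t'-t)*K) :=
    max_le_max h1 h2
  rw [max_add_add_right] at h3
  have : max (tl A B C s t) (tu A E C s t) = cm A B E C s t := rfl
  linarith [h3, this ▸ h3]

lemma max0_lemma {m m1 m2 M : ℝ} (hsum : m1 + m2 = M + m) (h1 : m1 ≤ M) (h2 : m2 ≤ M) :
    max 0 m1 + max 0 m2 ≤ max 0 M + max 0 m := by
  rcases le_or_gt m1 0 with hm1 | hm1 <;> rcases le_or_gt m2 0 with hm2 | hm2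
  · simp [max_eq_left hm1, max_eq_left hm2]; positivity
  · rw [max_eq_left hm1, max_eq_right hm2.le]
    have : m2 ≤ max 0 M := le_trans h2 (le_max_right 0 M)
    linarith [le_max_left (0:ℝ) m]
  · rw [max_eq_left hm2, max_eq_right hm1.le]
    have : m1 ≤ max 0 M := le_trans h1 (le_max_right 0 M)
    linarith [le_max_left (0:ℝ) m]
  · rw [max_eq_right hm1.le, max_eq_right hm2.le]
    have hMpos : 0 < M := lt_of_lt_of_le hm1 h1
    rw [max_eq_right hMpos.le]
    rcases le_or_gt m 0 with hm | hm
    · rw [max_eq_left hm]; linarith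
    · rw [max_eq_right hm.le]; linarith

lemma cm_eq_tl_add (hD : A + C ≤ E + B) :
    cm A B E C s t = tl A B C s t + max 0 ((t - s) * (E + B - A - C)) := by
  unfold cm tu tl
  rcases le_total t s with h | h
  · have h1 : (1 - t) * A + (t - s) * E + s * C ≤ (1 - s) * A + (s - t) * B + t * C := by
      nlinarith [mul_nonneg (sub_nonneg.2 h) (sub_nonneg.2 hD)]
    have h2 : (t - s) * (E + B - A - C) ≤ 0 := by
      nlinarith [mul_nonneg (sub_nonneg.2 h) (sub_nonneg.2 hD)]
    rw [max_eq_left h1, max_eq_left h2]; ring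
  · have h1 : (1 - s) * A + (s - t) * B + t * C ≤ (1 - t) * A + (t - s) * E + s * C := by
      nlinarith [mul_nonneg (sub_nonneg.2 h) (sub_nonneg.2 hD)]
    have h2 : (0:ℝ) ≤ (t - s) * (E + B - A - C) := by
      nlinarith [mul_nonneg (sub_nonneg.2 h) (sub_nonneg.2 hD)]
    rw [max_eq_right h1, max_eq_right h2]; ring

lemma cm_submod (hD : A + C ≤ E + B) (hs : s ≤ s') (ht : t ≤ t') :
    cm A B E C s t + cm A B E C s' t' ≤ cm A B E C s t' + cm A B E C s' t := by
  rw [cm_eq_tl_add hD, cm_eq_tl_add hD, cm_eq_tl_add hD, cm_eq_tl_add hD]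
  set F := E + B - A - C with hF
  have hF0 : 0 ≤ F := by simp [hF]; linarith
  have htl : tl A B C s t + tl A B C s' t' = tl A B C s t' + tl A B C s' t := by
    unfold tl; ring
  have key : max 0 ((t - s) * F) + max 0 ((t' - s') * F) ≤
      max 0 ((t' - s) * F) + max 0 ((t - s') * F) := by
    apply max0_lemma
    · ring
    · nlinarith
    · nlinarith
  linarith

-- boundary values of cm
lemma cm_s0 (ht : 0 ≤ t) (hD : A + C ≤ E + B) : cm A B E C 0 t = (1 - t) * A + t * E := by
  rw [cm_eq_tu hD ht]; unfold tu; ring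

lemma cm_s1 (ht : t ≤ 1) (hD : A + C ≤ E + B) : cm A B E C 1 t = (1 - t) * B + t * C := by
  rw [cm_eq_tl hD ht]; unfold tl; ring

lemma cm_t0 (hs : 0 ≤ s) (hD : A + C ≤ E + B) : cm A B E C s 0 = (1 - s) * A + s * B := by
  rw [cm_eq_tl hD hs]; unfold tl; ring

lemma cm_t1 (hs : s ≤ 1) (hD : A + C ≤ E + B) : cm A B E C s 1 = (1 - s) * E + s * C := by
  rw [cm_eq_tu hD hs]; unfold tu; ring

end scalars
-- continuation: connect u1l/u1u to tl/tu, localization of uPL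
section connect
variable {N₁ N₂ : ℕ} {x y : ℕ → ℝ} {g : ℕ → ℕ → ℝ} {L p q : ℝ}

/-- the max form on a closed cell -/
def cellM (x y : ℕ → ℝ) (g : ℕ → ℕ → ℝ) (i j : ℕ) (p q : ℝ) : ℝ :=
  cm (g i j) (g (i+1) j) (g i (j+1)) (g (i+1) (j+1))
    ((p - x i) / (x (i+1) - x i)) ((q - y j) / (y (j+1) - y j))

lemma u1l_eq {i j : ℕ} (hdx : x (i+1) - x i ≠ 0) :
    u1l x y g i j p q = tl (g i j) (g (i+1) j) (g (i+1) (j+1))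
      ((p - x i) / (x (i+1) - x i)) ((q - y j) / (y (j+1) - y j)) := by
  unfold u1l tl
  have : (x (i+1) - p) / (x (i+1) - x i) = 1 - (p - x i) / (x (i+1) - x i) := by
    field_simp
    ring
  rw [this]

lemma u1u_eq {i j : ℕ} (hdy : y (j+1) - y j ≠ 0) :
    u1u x y g i j p q = tu (g i j) (g i (j+1)) (g (i+1) (j+1))
      ((p - x i) / (x (i+1) - x i)) ((q - y j) / (y (j+1) - y j)) := by
  unfold u1u tu
  have : (y (j+1) - q) / (y (j+1) - y j) = 1 - (q - y j) / (y (j+1) - y j) := by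
    field_simp
    ring
  rw [this]

/-- weak monotonicity of the nodes -/
lemma x_le_x (hx : ∀ i, 1 ≤ i → i < N₁ → x i < x (i+1)) {i i' : ℕ}
    (h1 : 1 ≤ i) (h2 : i ≤ i') (h3 : i' ≤ N₁) : x i ≤ x i' := by
  induction i' with
  | zero => omega
  | succ n ih =>
    rcases Nat.lt_or_ge i (n+1) with h | h
    · have hn : x i ≤ x n := ih (by omega) (by omega)
      exact hn.trans (hx n (by omega) (by omega)).le
    · have : i = n + 1 := by omega
      simp [this]

lemma x_lt_x (hx : ∀ i, 1 ≤ i → i < N₁ → x i < x (i+1)) {i i' : ℕ}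
    (h1 : 1 ≤ i) (h2 : i < i') (h3 : i' ≤ N₁) : x i < x i' := by
  have h4 : x (i+1) ≤ x i' := x_le_x hx (by omega) (by omega) h3
  exact lt_of_lt_of_le (hx i h1 (by omega)) h4

lemma memX_le {i : ℕ} (h : memX x i p) : x i ≤ p ∧ p ≤ x (i+1) := by
  unfold memX at h
  split_ifs at h with h1
  · subst h1; exact h
  · exact ⟨h.1.le, h.2⟩

lemma exists_memX : ∀ n, 2 ≤ n → (∀ i, 1 ≤ i → i < n → x i < x (i+1)) →
    x 1 ≤ p → p ≤ x n → ∃ i, 1 ≤ i ∧ i ≤ n - 1 ∧ memX x i p := by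
  intro n
  induction n with
  | zero => omega
  | succ n ih =>
    intro h2 hx hp hp'
    rcases Nat.lt_or_ge n 2 with hn | hn
    · refine ⟨1, le_refl _, by omega, ?_⟩
      have : n = 1 := by omega
      subst this
      simp [memX, hp, hp']
    · rcases le_or_gt p (x n) with h | h
      · obtain ⟨i, hi1, hi2, hi3⟩ := ih hn (fun i a b => hx i a (by omega)) hp h
        exact ⟨i, hi1, by omega, hi3⟩
      · refine ⟨n, by omega, by omega, ?_⟩
        unfold memX
        rw [if_neg (by omega)]
        exact ⟨h, hp'⟩

lemma memX_cases (hx : ∀ i, 1 ≤ i → i < N₁ → x i < x (i+1)) {i₀ i : ℕ}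
    (hi₀1 : 1 ≤ i₀) (hi₀2 : i₀ ≤ N₁ - 1) (hi1 : 1 ≤ i) (hi2 : i ≤ N₁ - 1)
    (hN : 2 ≤ N₁)
    (hmem : memX x i₀ p) (hp1 : x i ≤ p) (hp2 : p ≤ x (i+1)) :
    i₀ = i ∨ (i₀ + 1 = i ∧ p = x i) := by
  obtain ⟨hle, hle'⟩ := memX_le hmem
  rcases lt_trichotomy i₀ i with h | h | h
  · right
    have hxi : x (i₀+1) ≤ x i := x_le_x hx (by omega) (by omega) (by omega)
    have hpx : p = x i := le_antisymm (hle'.trans hxi) hp1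
    constructor
    · by_contra hne
      have : x (i₀+1) < x i := x_lt_x hx (by omega) (by omega) (by omega)
      linarith
    · exact hpx
  · exact Or.inl h
  · exfalso
    have hi₀2' : 2 ≤ i₀ := by omega
    have hstrict : x i₀ < p := by
      unfold memX at hmem
      rw [if_neg (by omega)] at hmem
      exact hmem.1
    have : x (i+1) ≤ x i₀ := x_le_x hx (by omega) (by omega) (by omega)
    linarith

lemma uPL_eq_cell (hN₁ : 2 ≤ N₁) (hN₂ : 2 ≤ N₂)
    (hx : ∀ i, 1 ≤ i → i < N₁ → x i < x (i+1))
    (hy : ∀ j, 1 ≤ j → j < N₂ → y j < y (j+1))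
    {i j : ℕ} (hi1 : 1 ≤ i) (hi2 : i ≤ N₁ - 1) (hj1 : 1 ≤ j) (hj2 : j ≤ N₂ - 1)
    (hmem : memCell x y i j p q) :
    uPL N₁ N₂ x y g p q =
      if (q - y j) * (x (i+1) - x i) ≤ (p - x i) * (y (j+1) - y j)
        then u1l x y g i j p q else u1u x y g i j p q := by
  unfold uPL
  rw [Finset.sum_eq_single_of_mem i (Finset.mem_Icc.mpr ⟨hi1, hi2⟩)]
  · rw [Finset.sum_eq_single_of_mem j (Finset.mem_Icc.mpr ⟨hj1, hj2⟩)]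
    · rw [if_pos hmem]
    · intro j' hj' hne
      rw [if_neg]
      intro hmem'
      have h1 := memX_le hmem.2
      have h2 : j' = j := by
        rcases memX_cases hy (Finset.mem_Icc.mp hj').1 (Finset.mem_Icc.mp hj').2 hj1 hj2 hN₂
          hmem'.2 h1.1 h1.2 with h | h
        · exact h
        · exfalso
          -- j' + 1 = j and q = y j;  but then memX y j q says y j < q unless j = 1;
          -- j = j' + 1 ≥ 2, and hmem.2 : memX y j q needs y j < q, contradiction with q = y j
          obtain ⟨hje, hqe⟩ := h
          have hj'1 : 1 ≤ j' := (Finset.mem_Icc.mp hj').1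
          have hj2' : 2 ≤ j := by omega
          have : y j < q := by
            have := hmem.2
            unfold memX at this
            rw [if_neg (by omega)] at this
            exact this.1
          rw [show q = y j from hqe] at this
          exact lt_irrefl _ this
      exact hne h2
  · intro i' hi' hne
    apply Finset.sum_eq_zero
    intro j' _
    rw [if_neg]
    intro hmem'
    have h1 := memX_le hmem.1
    have h2 : i' = i := by
      rcases memX_cases hx (Finset.mem_Icc.mp hi').1 (Finset.mem_Icc.mp hi').2 hi1 hi2 hN₁
        hmem'.1 h1.1 h1.2 with h | h
      · exact h
      · exfalso
        obtain ⟨hie, hpe⟩ := h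
        have hi'1 : 1 ≤ i' := (Finset.mem_Icc.mp hi').1
        have hi2' : 2 ≤ i := by omega
        have : x i < p := by
          have := hmem.1
          unfold memX at this
          rw [if_neg (by omega)] at this
          exact this.1
        rw [show p = x i from hpe] at this
        exact lt_irrefl _ this
    exact hne h2

lemma cell_formula {i j : ℕ} (hdx : 0 < x (i+1) - x i) (hdy : 0 < y (j+1) - y j)
    (hD : g i j + g (i+1) (j+1) ≤ g i (j+1) + g (i+1) j) :
    (if (q - y j) * (x (i+1) - x i) ≤ (p - x i) * (y (j+1) - y j)
      then u1l x y g i j p q else u1u x y g i j p q) = cellM x y g i j p q := by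
  have hiff : ((q - y j) * (x (i+1) - x i) ≤ (p - x i) * (y (j+1) - y j)) ↔
      (q - y j) / (y (j+1) - y j) ≤ (p - x i) / (x (i+1) - x i) := by
    rw [div_le_div_iff₀ hdy hdx]
  split_ifs with h
  · rw [u1l_eq hdx.ne', cellM, cm_eq_tl hD (hiff.mp h)]
  · rw [u1u_eq hdy.ne', cellM, cm_eq_tu hD (le_of_not_ge (fun h' => h (hiff.mpr h')))]

end connect
section closed
variable {N₁ N₂ : ℕ} {x y : ℕ → ℝ} {g : ℕ → ℕ → ℝ} {L p q : ℝ}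

/-- grid-level hypotheses: adjacent monotonicity, Lipschitz, submodularity -/
def GridOK (N₁ N₂ : ℕ) (x y : ℕ → ℝ) (L : ℝ) (g : ℕ → ℕ → ℝ) : Prop :=
  (∀ i j, 1 ≤ i → i < N₁ → 1 ≤ j → j ≤ N₂ →
    0 ≤ g (i+1) j - g i j ∧ g (i+1) j - g i j ≤ L * (x (i+1) - x i)) ∧
  (∀ i j, 1 ≤ i → i ≤ N₁ → 1 ≤ j → j < N₂ →
    0 ≤ g i (j+1) - g i j ∧ g i (j+1) - g i j ≤ L * (y (j+1) - y j)) ∧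
  (∀ i j, 1 ≤ i → i < N₁ → 1 ≤ j → j < N₂ →
    g i j + g (i+1) (j+1) ≤ g i (j+1) + g (i+1) j)

lemma cellM_shift_x (hx : ∀ i, 1 ≤ i → i < N₁ → x i < x (i+1))
    (hy : ∀ j, 1 ≤ j → j < N₂ → y j < y (j+1))
    (hg : GridOK N₁ N₂ x y L g)
    {i j : ℕ} (hi1 : 1 ≤ i) (hi2 : i + 1 ≤ N₁ - 1) (hj1 : 1 ≤ j) (hj2 : j ≤ N₂ - 1)
    (hN₁ : 2 ≤ N₁)
    (hq1 : y j ≤ q) (hq2 : q ≤ y (j+1)) :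
    cellM x y g i j (x (i+1)) q = cellM x y g (i+1) j (x (i+1)) q := by
  have hdx : 0 < x (i+1) - x i := by have := hx i hi1 (by omega); linarith
  have hdy : 0 < y (j+1) - y j := by have := hy j hj1 (by omega); linarith
  have hD1 := hg.2.2 i j hi1 (by omega) hj1 (by omega)
  have hD2 := hg.2.2 (i+1) j (by omega) (by omega) hj1 (by omega)
  have ht0 : 0 ≤ (q - y j) / (y (j+1) - y j) := div_nonneg (by linarith) hdy.le
  have ht1 : (q - y j) / (y (j+1) - y j) ≤ 1 := by rw [div_le_one hdy]; linarith
  unfold cellM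
  have e1 : (x (i+1) - x i) / (x (i+1) - x i) = 1 := div_self hdx.ne'
  have e2 : (x (i+1) - x (i+1)) / (x (i+1+1) - x (i+1)) = 0 := by simp
  rw [e1, e2, cm_s1 ht1 hD1, cm_s0 ht0 hD2]

lemma cellM_shift_y (hx : ∀ i, 1 ≤ i → i < N₁ → x i < x (i+1))
    (hy : ∀ j, 1 ≤ j → j < N₂ → y j < y (j+1))
    (hg : GridOK N₁ N₂ x y L g)
    {i j : ℕ} (hi1 : 1 ≤ i) (hi2 : i ≤ N₁ - 1) (hj1 : 1 ≤ j) (hj2 : j + 1 ≤ N₂ - 1)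
    (hN₂ : 2 ≤ N₂)
    (hp1 : x i ≤ p) (hp2 : p ≤ x (i+1)) :
    cellM x y g i j p (y (j+1)) = cellM x y g i (j+1) p (y (j+1)) := by
  have hdy : 0 < y (j+1) - y j := by have := hy j hj1 (by omega); linarith
  have hdx : 0 < x (i+1) - x i := by have := hx i hi1 (by omega); linarith
  have hD1 := hg.2.2 i j hi1 (by omega) hj1 (by omega)
  have hD2 := hg.2.2 i (j+1) hi1 (by omega) (by omega) (by omega)
  have hs0 : 0 ≤ (p - x i) / (x (i+1) - x i) := div_nonneg (by linarith) hdx.le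
  have hs1 : (p - x i) / (x (i+1) - x i) ≤ 1 := by rw [div_le_one hdx]; linarith
  unfold cellM
  have e1 : (y (j+1) - y j) / (y (j+1) - y j) = 1 := div_self hdy.ne'
  have e2 : (y (j+1) - y (j+1)) / (y (j+1+1) - y (j+1)) = 0 := by simp
  rw [e1, e2, cm_t1 hs1 hD1, cm_t0 hs0 hD2]

/-- main localization: on the closed cell `(i,j)` the PLA equals `cellM i j`. -/
lemma uPL_closedCell (hN₁ : 2 ≤ N₁) (hN₂ : 2 ≤ N₂)
    (hx : ∀ i, 1 ≤ i → i < N₁ → x i < x (i+1))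
    (hy : ∀ j, 1 ≤ j → j < N₂ → y j < y (j+1))
    (hg : GridOK N₁ N₂ x y L g)
    {i j : ℕ} (hi1 : 1 ≤ i) (hi2 : i ≤ N₁ - 1) (hj1 : 1 ≤ j) (hj2 : j ≤ N₂ - 1)
    (hp1 : x i ≤ p) (hp2 : p ≤ x (i+1)) (hq1 : y j ≤ q) (hq2 : q ≤ y (j+1)) :
    uPL N₁ N₂ x y g p q = cellM x y g i j p q := by
  have hx1p : x 1 ≤ p := le_trans (x_le_x hx le_rfl hi1 (by omega)) hp1
  have hpN : p ≤ x N₁ := le_trans hp2 (x_le_x hx (by omega) (by omega) le_rfl)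
  have hy1q : y 1 ≤ q := le_trans (x_le_x hy le_rfl hj1 (by omega)) hq1
  have hqN : q ≤ y N₂ := le_trans hq2 (x_le_x hy (by omega) (by omega) le_rfl)
  obtain ⟨i₀, hi₀1, hi₀2, hmi⟩ := exists_memX N₁ hN₁ hx hx1p hpN
  obtain ⟨j₀, hj₀1, hj₀2, hmj⟩ := exists_memX N₂ hN₂ hy hy1q hqN
  have hdx₀ : 0 < x (i₀+1) - x i₀ := by have := hx i₀ hi₀1 (by omega); linarith
  have hdy₀ : 0 < y (j₀+1) - y j₀ := by have := hy j₀ hj₀1 (by omega); linarith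
  have hD₀ := hg.2.2 i₀ j₀ hi₀1 (by omega) hj₀1 (by omega)
  rw [uPL_eq_cell hN₁ hN₂ hx hy hi₀1 hi₀2 hj₀1 hj₀2 ⟨hmi, hmj⟩,
    cell_formula hdx₀ hdy₀ hD₀]
  have hq₀ := memX_le hmj
  -- step 1: shift x index
  have step1 : cellM x y g i₀ j₀ p q = cellM x y g i j₀ p q := by
    rcases memX_cases hx hi₀1 hi₀2 hi1 hi2 hN₁ hmi hp1 hp2 with h | ⟨hie, hpe⟩
    · rw [h]
    · rw [hpe, ← hie]
      exact cellM_shift_x hx hy hg hi₀1 (by omega) hj₀1 hj₀2 hN₁ hq₀.1 hq₀.2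
  rw [step1]
  -- step 2: shift y index
  rcases memX_cases hy hj₀1 hj₀2 hj1 hj2 hN₂ hmj hq1 hq2 with h | ⟨hje, hqe⟩
  · rw [h]
  · rw [hqe, ← hje]
    exact cellM_shift_y hx hy hg hi1 hi2 hj₀1 (by omega) hN₂ hp1 hp2

end closed
section cellprops
variable {N₁ N₂ : ℕ} {x y : ℕ → ℝ} {g : ℕ → ℕ → ℝ} {L p p' q q' : ℝ}

lemma cellM_corner00 {i j : ℕ} (hdx : 0 < x (i+1) - x i) (hdy : 0 < y (j+1) - y j)
    (hD : g i j + g (i+1) (j+1) ≤ g i (j+1) + g (i+1) j) :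
    cellM x y g i j (x i) (y j) = g i j := by
  unfold cellM
  rw [show (x i - x i) / (x (i+1) - x i) = 0 by simp,
    show (y j - y j) / (y (j+1) - y j) = 0 by simp, cm_s0 le_rfl hD]
  ring

lemma cellM_corner10 {i j : ℕ} (hdx : 0 < x (i+1) - x i) (hdy : 0 < y (j+1) - y j)
    (hD : g i j + g (i+1) (j+1) ≤ g i (j+1) + g (i+1) j) :
    cellM x y g i j (x (i+1)) (y j) = g (i+1) j := by
  unfold cellM
  rw [show (x (i+1) - x i) / (x (i+1) - x i) = 1 from div_self hdx.ne',
    show (y j - y j) / (y (j+1) - y j) = 0 by simp, cm_t0 zero_le_one hD]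
  ring

lemma cellM_corner01 {i j : ℕ} (hdx : 0 < x (i+1) - x i) (hdy : 0 < y (j+1) - y j)
    (hD : g i j + g (i+1) (j+1) ≤ g i (j+1) + g (i+1) j) :
    cellM x y g i j (x i) (y (j+1)) = g i (j+1) := by
  unfold cellM
  rw [show (x i - x i) / (x (i+1) - x i) = 0 by simp,
    show (y (j+1) - y j) / (y (j+1) - y j) = 1 from div_self hdy.ne', cm_s0 zero_le_one hD]
  ring

lemma cellM_corner11 {i j : ℕ} (hdx : 0 < x (i+1) - x i) (hdy : 0 < y (j+1) - y j)
    (hD : g i j + g (i+1) (j+1) ≤ g i (j+1) + g (i+1) j) :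
    cellM x y g i j (x (i+1)) (y (j+1)) = g (i+1) (j+1) := by
  unfold cellM
  rw [show (x (i+1) - x i) / (x (i+1) - x i) = 1 from div_self hdx.ne',
    show (y (j+1) - y j) / (y (j+1) - y j) = 1 from div_self hdy.ne', cm_s1 le_rfl hD]
  ring

lemma cellM_x (hL : 0 ≤ L) {i j : ℕ} (hdx : 0 < x (i+1) - x i) (hdy : 0 < y (j+1) - y j)
    (hAB : g i j ≤ g (i+1) j) (hEC : g i (j+1) ≤ g (i+1) (j+1))
    (hBA : g (i+1) j - g i j ≤ L * (x (i+1) - x i))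
    (hCE : g (i+1) (j+1) - g i (j+1) ≤ L * (x (i+1) - x i))
    (hpp : p ≤ p') :
    cellM x y g i j p q ≤ cellM x y g i j p' q ∧
      cellM x y g i j p' q - cellM x y g i j p q ≤ L * (p' - p) := by
  have hs : (p - x i) / (x (i+1) - x i) ≤ (p' - x i) / (x (i+1) - x i) :=
    (div_le_div_iff_of_pos_right hdx).mpr (by linarith)
  constructor
  · exact cm_mono_s hAB hEC hs
  · have h := cm_lip_s (t := (q - y j) / (y (j+1) - y j)) (K := L * (x (i+1) - x i)) hBA hCE hs
    calc cellM x y g i j p' q - cellM x y g i j p q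
        ≤ ((p' - x i) / (x (i+1) - x i) - (p - x i) / (x (i+1) - x i)) * (L * (x (i+1) - x i)) := h
      _ = L * (p' - p) := by field_simp; ring

lemma cellM_y (hL : 0 ≤ L) {i j : ℕ} (hdx : 0 < x (i+1) - x i) (hdy : 0 < y (j+1) - y j)
    (hBC : g (i+1) j ≤ g (i+1) (j+1)) (hAE : g i j ≤ g i (j+1))
    (hCB : g (i+1) (j+1) - g (i+1) j ≤ L * (y (j+1) - y j))
    (hEA : g i (j+1) - g i j ≤ L * (y (j+1) - y j))
    (hqq : q ≤ q') :
    cellM x y g i j p q ≤ cellM x y g i j p q' ∧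
      cellM x y g i j p q' - cellM x y g i j p q ≤ L * (q' - q) := by
  have ht : (q - y j) / (y (j+1) - y j) ≤ (q' - y j) / (y (j+1) - y j) :=
    (div_le_div_iff_of_pos_right hdy).mpr (by linarith)
  constructor
  · exact cm_mono_t hBC hAE ht
  · have h := cm_lip_t (s := (p - x i) / (x (i+1) - x i)) (K := L * (y (j+1) - y j)) hCB hEA ht
    calc cellM x y g i j p q' - cellM x y g i j p q
        ≤ ((q' - y j) / (y (j+1) - y j) - (q - y j) / (y (j+1) - y j)) * (L * (y (j+1) - y j)) := h
      _ = L * (q' - q) := by field_simp; ring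

lemma cellM_submod {i j : ℕ} (hdx : 0 < x (i+1) - x i) (hdy : 0 < y (j+1) - y j)
    (hD : g i j + g (i+1) (j+1) ≤ g i (j+1) + g (i+1) j)
    (hpp : p ≤ p') (hqq : q ≤ q') :
    cellM x y g i j p q + cellM x y g i j p' q' ≤
      cellM x y g i j p q' + cellM x y g i j p' q := by
  exact cm_submod hD
    ((div_le_div_iff_of_pos_right hdx).mpr (by linarith))
    ((div_le_div_iff_of_pos_right hdy).mpr (by linarith))

end cellprops
section global
variable {N₁ N₂ : ℕ} {x y : ℕ → ℝ} {g : ℕ → ℕ → ℝ} {L p p' q q' : ℝ}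

lemma gridx (hg : GridOK N₁ N₂ x y L g) {i j : ℕ}
    (hi1 : 1 ≤ i) (hi2 : i ≤ N₁ - 1) (hj1 : 1 ≤ j) (hj2 : j ≤ N₂ - 1) (hN₁ : 2 ≤ N₁) :
    g i j ≤ g (i+1) j ∧ g i (j+1) ≤ g (i+1) (j+1) ∧
    g (i+1) j - g i j ≤ L * (x (i+1) - x i) ∧
    g (i+1) (j+1) - g i (j+1) ≤ L * (x (i+1) - x i) := by
  have h1 := hg.1 i j hi1 (by omega) hj1 (by omega)
  have h2 := hg.1 i (j+1) hi1 (by omega) (by omega) (by omega)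
  exact ⟨by linarith [h1.1], by linarith [h2.1], h1.2, h2.2⟩

lemma gridy (hg : GridOK N₁ N₂ x y L g) {i j : ℕ}
    (hi1 : 1 ≤ i) (hi2 : i ≤ N₁ - 1) (hj1 : 1 ≤ j) (hj2 : j ≤ N₂ - 1) (hN₂ : 2 ≤ N₂) :
    g (i+1) j ≤ g (i+1) (j+1) ∧ g i j ≤ g i (j+1) ∧
    g (i+1) (j+1) - g (i+1) j ≤ L * (y (j+1) - y j) ∧
    g i (j+1) - g i j ≤ L * (y (j+1) - y j) := by
  have h1 := hg.2.1 (i+1) j (by omega) (by omega) hj1 (by omega)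
  have h2 := hg.2.1 i j hi1 (by omega) hj1 (by omega)
  exact ⟨by linarith [h1.1], by linarith [h2.1], h1.2, h2.2⟩

lemma v_x_onecell (hN₁ : 2 ≤ N₁) (hN₂ : 2 ≤ N₂)
    (hx : ∀ i, 1 ≤ i → i < N₁ → x i < x (i+1))
    (hy : ∀ j, 1 ≤ j → j < N₂ → y j < y (j+1))
    (hg : GridOK N₁ N₂ x y L g) (hL : 0 ≤ L)
    {i j : ℕ} (hi1 : 1 ≤ i) (hi2 : i ≤ N₁ - 1) (hj1 : 1 ≤ j) (hj2 : j ≤ N₂ - 1)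
    (hp : x i ≤ p) (hpp : p ≤ p') (hp' : p' ≤ x (i+1)) (hq1 : y j ≤ q) (hq2 : q ≤ y (j+1)) :
    0 ≤ uPL N₁ N₂ x y g p' q - uPL N₁ N₂ x y g p q ∧
      uPL N₁ N₂ x y g p' q - uPL N₁ N₂ x y g p q ≤ L * (p' - p) := by
  have hdx : 0 < x (i+1) - x i := by have := hx i hi1 (by omega); linarith
  have hdy : 0 < y (j+1) - y j := by have := hy j hj1 (by omega); linarith
  rw [uPL_closedCell hN₁ hN₂ hx hy hg hi1 hi2 hj1 hj2 hp (hpp.trans hp') hq1 hq2,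
    uPL_closedCell hN₁ hN₂ hx hy hg hi1 hi2 hj1 hj2 (hp.trans hpp) hp' hq1 hq2]
  obtain ⟨hAB, hEC, hBA, hCE⟩ := gridx hg hi1 hi2 hj1 hj2 hN₁
  have h := cellM_x (q := q) hL hdx hdy hAB hEC hBA hCE hpp
  exact ⟨by linarith [h.1], h.2⟩

lemma v_y_onecell (hN₁ : 2 ≤ N₁) (hN₂ : 2 ≤ N₂)
    (hx : ∀ i, 1 ≤ i → i < N₁ → x i < x (i+1))
    (hy : ∀ j, 1 ≤ j → j < N₂ → y j < y (j+1))
    (hg : GridOK N₁ N₂ x y L g) (hL : 0 ≤ L)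
    {i j : ℕ} (hi1 : 1 ≤ i) (hi2 : i ≤ N₁ - 1) (hj1 : 1 ≤ j) (hj2 : j ≤ N₂ - 1)
    (hp : x i ≤ p) (hp' : p ≤ x (i+1)) (hq1 : y j ≤ q) (hqq : q ≤ q') (hq2 : q' ≤ y (j+1)) :
    0 ≤ uPL N₁ N₂ x y g p q' - uPL N₁ N₂ x y g p q ∧
      uPL N₁ N₂ x y g p q' - uPL N₁ N₂ x y g p q ≤ L * (q' - q) := by
  have hdx : 0 < x (i+1) - x i := by have := hx i hi1 (by omega); linarith
  have hdy : 0 < y (j+1) - y j := by have := hy j hj1 (by omega); linarith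
  rw [uPL_closedCell hN₁ hN₂ hx hy hg hi1 hi2 hj1 hj2 hp hp' hq1 (hqq.trans hq2),
    uPL_closedCell hN₁ hN₂ hx hy hg hi1 hi2 hj1 hj2 hp hp' (hq1.trans hqq) hq2]
  obtain ⟨hBC, hAE, hCB, hEA⟩ := gridy hg hi1 hi2 hj1 hj2 hN₂
  have h := cellM_y (p := p) hL hdx hdy hBC hAE hCB hEA hqq
  exact ⟨by linarith [h.1], h.2⟩

lemma v_x_step (hN₁ : 2 ≤ N₁) (hN₂ : 2 ≤ N₂)
    (hx : ∀ i, 1 ≤ i → i < N₁ → x i < x (i+1))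
    (hy : ∀ j, 1 ≤ j → j < N₂ → y j < y (j+1))
    (hg : GridOK N₁ N₂ x y L g) (hL : 0 ≤ L) :
    ∀ i', 1 ≤ i' → i' ≤ N₁ - 1 → ∀ p p' q j, 1 ≤ j → j ≤ N₂ - 1 → y j ≤ q → q ≤ y (j+1) →
    x 1 ≤ p → p ≤ p' → x i' ≤ p' → p' ≤ x (i'+1) →
    0 ≤ uPL N₁ N₂ x y g p' q - uPL N₁ N₂ x y g p q ∧
      uPL N₁ N₂ x y g p' q - uPL N₁ N₂ x y g p q ≤ L * (p' - p) := by
  intro i'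
  induction i' with
  | zero => omega
  | succ n ih =>
    intro h1 h2 p p' q j hj1 hj2 hq1 hq2 hp1 hpp hp'1 hp'2
    by_cases hc : x (n+1) ≤ p
    · exact v_x_onecell hN₁ hN₂ hx hy hg hL (by omega) h2 hj1 hj2 hc hpp hp'2 hq1 hq2
    · push_neg at hc
      rcases Nat.lt_or_ge n 1 with hn | hn
      · interval_cases n
        · exact absurd (hp1.trans_lt hc) (lt_irrefl _)
      · have hmid := ih hn (by omega) p (x (n+1)) q j hj1 hj2 hq1 hq2 hp1 hc.le
          (x_le_x hx hn (by omega) (by omega)) le_rfl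
        have hright := v_x_onecell hN₁ hN₂ hx hy hg hL (by omega : 1 ≤ n+1) h2 hj1 hj2
          le_rfl hp'1 hp'2 hq1 hq2
        constructor <;> linarith [hmid.1, hmid.2, hright.1, hright.2]


lemma v_y_step (hN₁ : 2 ≤ N₁) (hN₂ : 2 ≤ N₂)
    (hx : ∀ i, 1 ≤ i → i < N₁ → x i < x (i+1))
    (hy : ∀ j, 1 ≤ j → j < N₂ → y j < y (j+1))
    (hg : GridOK N₁ N₂ x y L g) (hL : 0 ≤ L) :
    ∀ j', 1 ≤ j' → j' ≤ N₂ - 1 → ∀ q q' p i, 1 ≤ i → i ≤ N₁ - 1 → x i ≤ p → p ≤ x (i+1) →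
    y 1 ≤ q → q ≤ q' → y j' ≤ q' → q' ≤ y (j'+1) →
    0 ≤ uPL N₁ N₂ x y g p q' - uPL N₁ N₂ x y g p q ∧
      uPL N₁ N₂ x y g p q' - uPL N₁ N₂ x y g p q ≤ L * (q' - q) := by
  intro j'
  induction j' with
  | zero => omega
  | succ n ih =>
    intro h1 h2 q q' p i hi1 hi2 hp1 hp2 hq1 hqq hq'1 hq'2
    by_cases hc : y (n+1) ≤ q
    · exact v_y_onecell hN₁ hN₂ hx hy hg hL hi1 hi2 (by omega) h2 hp1 hp2 hc hqq hq'2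
    · push_neg at hc
      rcases Nat.lt_or_ge n 1 with hn | hn
      · interval_cases n
        · exact absurd (hq1.trans_lt hc) (lt_irrefl _)
      · have hmid := ih hn (by omega) q (y (n+1)) p i hi1 hi2 hp1 hp2 hq1 hc.le
          (x_le_x hy hn (by omega) (by omega)) le_rfl
        have hright := v_y_onecell hN₁ hN₂ hx hy hg hL hi1 hi2 (by omega : 1 ≤ n+1) h2
          hp1 hp2 le_rfl hq'1 hq'2
        constructor <;> linarith [hmid.1, hmid.2, hright.1, hright.2]

lemma v_x_glob (hN₁ : 2 ≤ N₁) (hN₂ : 2 ≤ N₂)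
    (hx : ∀ i, 1 ≤ i → i < N₁ → x i < x (i+1))
    (hy : ∀ j, 1 ≤ j → j < N₂ → y j < y (j+1))
    (hg : GridOK N₁ N₂ x y L g) (hL : 0 ≤ L)
    (hp1 : x 1 ≤ p) (hpp : p ≤ p') (hp2 : p' ≤ x N₁) (hq1 : y 1 ≤ q) (hq2 : q ≤ y N₂) :
    0 ≤ uPL N₁ N₂ x y g p' q - uPL N₁ N₂ x y g p q ∧
      uPL N₁ N₂ x y g p' q - uPL N₁ N₂ x y g p q ≤ L * (p' - p) := by
  obtain ⟨i', hi'1, hi'2, hmi⟩ := exists_memX N₁ hN₁ hx (hp1.trans hpp) hp2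
  obtain ⟨j, hj1, hj2, hmj⟩ := exists_memX N₂ hN₂ hy hq1 hq2
  obtain ⟨ha, hb⟩ := memX_le hmi
  obtain ⟨hc, hd⟩ := memX_le hmj
  exact v_x_step hN₁ hN₂ hx hy hg hL i' hi'1 hi'2 p p' q j hj1 hj2 hc hd hp1 hpp ha hb

lemma v_y_glob (hN₁ : 2 ≤ N₁) (hN₂ : 2 ≤ N₂)
    (hx : ∀ i, 1 ≤ i → i < N₁ → x i < x (i+1))
    (hy : ∀ j, 1 ≤ j → j < N₂ → y j < y (j+1))
    (hg : GridOK N₁ N₂ x y L g) (hL : 0 ≤ L)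
    (hp1 : x 1 ≤ p) (hp2 : p ≤ x N₁) (hq1 : y 1 ≤ q) (hqq : q ≤ q') (hq2 : q' ≤ y N₂) :
    0 ≤ uPL N₁ N₂ x y g p q' - uPL N₁ N₂ x y g p q ∧
      uPL N₁ N₂ x y g p q' - uPL N₁ N₂ x y g p q ≤ L * (q' - q) := by
  obtain ⟨j', hj'1, hj'2, hmj⟩ := exists_memX N₂ hN₂ hy (hq1.trans hqq) hq2
  obtain ⟨i, hi1, hi2, hmi⟩ := exists_memX N₁ hN₁ hx hp1 hp2
  obtain ⟨ha, hb⟩ := memX_le hmi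
  obtain ⟨hc, hd⟩ := memX_le hmj
  exact v_y_step hN₁ hN₂ hx hy hg hL j' hj'1 hj'2 q q' p i hi1 hi2 ha hb hq1 hqq hc hd

lemma v_mono2 (hN₁ : 2 ≤ N₁) (hN₂ : 2 ≤ N₂)
    (hx : ∀ i, 1 ≤ i → i < N₁ → x i < x (i+1))
    (hy : ∀ j, 1 ≤ j → j < N₂ → y j < y (j+1))
    (hg : GridOK N₁ N₂ x y L g) (hL : 0 ≤ L)
    (hp1 : x 1 ≤ p) (hpp : p ≤ p') (hp2 : p' ≤ x N₁)
    (hq1 : y 1 ≤ q) (hqq : q ≤ q') (hq2 : q' ≤ y N₂) :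
    uPL N₁ N₂ x y g p q ≤ uPL N₁ N₂ x y g p' q' := by
  have h1 := (v_x_glob hN₁ hN₂ hx hy hg hL hp1 hpp hp2 hq1 (hqq.trans hq2)).1
  have h2 := (v_y_glob hN₁ hN₂ hx hy hg hL (hp1.trans hpp) hp2 hq1 hqq hq2).1
  linarith

lemma v_lip2 (hN₁ : 2 ≤ N₁) (hN₂ : 2 ≤ N₂)
    (hx : ∀ i, 1 ≤ i → i < N₁ → x i < x (i+1))
    (hy : ∀ j, 1 ≤ j → j < N₂ → y j < y (j+1))
    (hg : GridOK N₁ N₂ x y L g) (hL : 0 ≤ L)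
    (hp1 : x 1 ≤ p) (hp2 : p ≤ x N₁) (hp1' : x 1 ≤ p') (hp2' : p' ≤ x N₁)
    (hq1 : y 1 ≤ q) (hq2 : q ≤ y N₂) (hq1' : y 1 ≤ q') (hq2' : q' ≤ y N₂) :
    |uPL N₁ N₂ x y g p q - uPL N₁ N₂ x y g p' q'| ≤ L * (|p - p'| + |q - q'|) := by
  have hx' : |uPL N₁ N₂ x y g p q - uPL N₁ N₂ x y g p' q| ≤ L * |p - p'| := by
    rcases le_total p p' with h | h
    · have := v_x_glob (q := q) hN₁ hN₂ hx hy hg hL hp1 h hp2' hq1 hq2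
      rw [abs_of_nonpos (by linarith [this.1]), abs_of_nonpos (by linarith)]
      linarith [this.2]
    · have := v_x_glob (q := q) hN₁ hN₂ hx hy hg hL hp1' h hp2 hq1 hq2
      rw [abs_of_nonneg (by linarith [this.1]), abs_of_nonneg (by linarith)]
      linarith [this.2]
  have hy' : |uPL N₁ N₂ x y g p' q - uPL N₁ N₂ x y g p' q'| ≤ L * |q - q'| := by
    rcases le_total q q' with h | h
    · have := v_y_glob (p := p') hN₁ hN₂ hx hy hg hL hp1' hp2' hq1 h hq2'
      rw [abs_of_nonpos (by linarith [this.1]), abs_of_nonpos (by linarith)]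
      linarith [this.2]
    · have := v_y_glob (p := p') hN₁ hN₂ hx hy hg hL hp1' hp2' hq1' h hq2
      rw [abs_of_nonneg (by linarith [this.1]), abs_of_nonneg (by linarith)]
      linarith [this.2]
  calc |uPL N₁ N₂ x y g p q - uPL N₁ N₂ x y g p' q'|
      ≤ |uPL N₁ N₂ x y g p q - uPL N₁ N₂ x y g p' q| +
        |uPL N₁ N₂ x y g p' q - uPL N₁ N₂ x y g p' q'| := abs_sub_le _ _ _
    _ ≤ L * |p - p'| + L * |q - q'| := add_le_add hx' hy'
    _ = L * (|p - p'| + |q - q'|) := by ring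

end global
section global2
variable {N₁ N₂ : ℕ} {x y : ℕ → ℝ} {g : ℕ → ℕ → ℝ} {L p q a b c d : ℝ}

lemma v_submod_onecell (hN₁ : 2 ≤ N₁) (hN₂ : 2 ≤ N₂)
    (hx : ∀ i, 1 ≤ i → i < N₁ → x i < x (i+1))
    (hy : ∀ j, 1 ≤ j → j < N₂ → y j < y (j+1))
    (hg : GridOK N₁ N₂ x y L g)
    {i j : ℕ} (hi1 : 1 ≤ i) (hi2 : i ≤ N₁ - 1) (hj1 : 1 ≤ j) (hj2 : j ≤ N₂ - 1)
    (ha : x i ≤ a) (hab : a ≤ b) (hb : b ≤ x (i+1))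
    (hc : y j ≤ c) (hcd : c ≤ d) (hd : d ≤ y (j+1)) :
    uPL N₁ N₂ x y g a c + uPL N₁ N₂ x y g b d ≤
      uPL N₁ N₂ x y g a d + uPL N₁ N₂ x y g b c := by
  have hdx : 0 < x (i+1) - x i := by have := hx i hi1 (by omega); linarith
  have hdy : 0 < y (j+1) - y j := by have := hy j hj1 (by omega); linarith
  have hD := hg.2.2 i j hi1 (by omega) hj1 (by omega)
  rw [uPL_closedCell hN₁ hN₂ hx hy hg hi1 hi2 hj1 hj2 ha (hab.trans hb) hc (hcd.trans hd),
    uPL_closedCell hN₁ hN₂ hx hy hg hi1 hi2 hj1 hj2 (ha.trans hab) hb (hc.trans hcd) hd,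
    uPL_closedCell hN₁ hN₂ hx hy hg hi1 hi2 hj1 hj2 ha (hab.trans hb) (hc.trans hcd) hd,
    uPL_closedCell hN₁ hN₂ hx hy hg hi1 hi2 hj1 hj2 (ha.trans hab) hb hc (hcd.trans hd)]
  exact cellM_submod hdx hdy hD hab hcd

lemma v_submod_ystep (hN₁ : 2 ≤ N₁) (hN₂ : 2 ≤ N₂)
    (hx : ∀ i, 1 ≤ i → i < N₁ → x i < x (i+1))
    (hy : ∀ j, 1 ≤ j → j < N₂ → y j < y (j+1))
    (hg : GridOK N₁ N₂ x y L g) :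
    ∀ j', 1 ≤ j' → j' ≤ N₂ - 1 → ∀ c d, y 1 ≤ c → c ≤ d → y j' ≤ d → d ≤ y (j'+1) →
    ∀ i a b, 1 ≤ i → i ≤ N₁ - 1 → x i ≤ a → a ≤ b → b ≤ x (i+1) →
    uPL N₁ N₂ x y g a c + uPL N₁ N₂ x y g b d ≤
      uPL N₁ N₂ x y g a d + uPL N₁ N₂ x y g b c := by
  intro j'
  induction j' with
  | zero => omega
  | succ n ih =>
    intro h1 h2 c d hc1 hcd hd1 hd2 i a b hi1 hi2 ha hab hb
    by_cases hcc : y (n+1) ≤ c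
    · exact v_submod_onecell hN₁ hN₂ hx hy hg hi1 hi2 (by omega) h2 ha hab hb hcc hcd hd2
    · push_neg at hcc
      rcases Nat.lt_or_ge n 1 with hn | hn
      · interval_cases n
        · exact absurd (hc1.trans_lt hcc) (lt_irrefl _)
      · have hmid := ih hn (by omega) c (y (n+1)) hc1 hcc.le
          (x_le_x hy hn (by omega) (by omega)) le_rfl i a b hi1 hi2 ha hab hb
        have hright := v_submod_onecell hN₁ hN₂ hx hy hg hi1 hi2 (by omega : 1 ≤ n+1) h2
          ha hab hb le_rfl hd1 hd2
        linarith

lemma v_submod_cellx_glob (hN₁ : 2 ≤ N₁) (hN₂ : 2 ≤ N₂)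
    (hx : ∀ i, 1 ≤ i → i < N₁ → x i < x (i+1))
    (hy : ∀ j, 1 ≤ j → j < N₂ → y j < y (j+1))
    (hg : GridOK N₁ N₂ x y L g)
    {i : ℕ} (hi1 : 1 ≤ i) (hi2 : i ≤ N₁ - 1) (ha : x i ≤ a) (hab : a ≤ b) (hb : b ≤ x (i+1))
    (hc1 : y 1 ≤ c) (hcd : c ≤ d) (hd : d ≤ y N₂) :
    uPL N₁ N₂ x y g a c + uPL N₁ N₂ x y g b d ≤
      uPL N₁ N₂ x y g a d + uPL N₁ N₂ x y g b c := by
  obtain ⟨j', hj'1, hj'2, hmj⟩ := exists_memX N₂ hN₂ hy (hc1.trans hcd) hd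
  obtain ⟨h1, h2⟩ := memX_le hmj
  exact v_submod_ystep hN₁ hN₂ hx hy hg j' hj'1 hj'2 c d hc1 hcd h1 h2 i a b hi1 hi2 ha hab hb

lemma v_submod_xstep (hN₁ : 2 ≤ N₁) (hN₂ : 2 ≤ N₂)
    (hx : ∀ i, 1 ≤ i → i < N₁ → x i < x (i+1))
    (hy : ∀ j, 1 ≤ j → j < N₂ → y j < y (j+1))
    (hg : GridOK N₁ N₂ x y L g) :
    ∀ i', 1 ≤ i' → i' ≤ N₁ - 1 → ∀ a b, x 1 ≤ a → a ≤ b → x i' ≤ b → b ≤ x (i'+1) →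
    ∀ c d, y 1 ≤ c → c ≤ d → d ≤ y N₂ →
    uPL N₁ N₂ x y g a c + uPL N₁ N₂ x y g b d ≤
      uPL N₁ N₂ x y g a d + uPL N₁ N₂ x y g b c := by
  intro i'
  induction i' with
  | zero => omega
  | succ n ih =>
    intro h1 h2 a b ha1 hab hb1 hb2 c d hc1 hcd hd
    by_cases haa : x (n+1) ≤ a
    · exact v_submod_cellx_glob hN₁ hN₂ hx hy hg (by omega) h2 haa hab hb2 hc1 hcd hd
    · push_neg at haa
      rcases Nat.lt_or_ge n 1 with hn | hn
      · interval_cases n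
        · exact absurd (ha1.trans_lt haa) (lt_irrefl _)
      · have hmid := ih hn (by omega) a (x (n+1)) ha1 haa.le
          (x_le_x hx hn (by omega) (by omega)) le_rfl c d hc1 hcd hd
        have hright := v_submod_cellx_glob hN₁ hN₂ hx hy hg (by omega : 1 ≤ n+1) h2
          le_rfl hb1 hb2 hc1 hcd hd
        linarith

lemma v_submod_glob (hN₁ : 2 ≤ N₁) (hN₂ : 2 ≤ N₂)
    (hx : ∀ i, 1 ≤ i → i < N₁ → x i < x (i+1))
    (hy : ∀ j, 1 ≤ j → j < N₂ → y j < y (j+1))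
    (hg : GridOK N₁ N₂ x y L g)
    (ha1 : x 1 ≤ a) (hab : a ≤ b) (hb : b ≤ x N₁)
    (hc1 : y 1 ≤ c) (hcd : c ≤ d) (hd : d ≤ y N₂) :
    uPL N₁ N₂ x y g a c + uPL N₁ N₂ x y g b d ≤
      uPL N₁ N₂ x y g a d + uPL N₁ N₂ x y g b c := by
  obtain ⟨i', hi'1, hi'2, hmi⟩ := exists_memX N₁ hN₁ hx (ha1.trans hab) hb
  obtain ⟨h1, h2⟩ := memX_le hmi
  exact v_submod_xstep hN₁ hN₂ hx hy hg i' hi'1 hi'2 a b ha1 hab h1 h2 c d hc1 hcd hd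

lemma v_grid (hN₁ : 2 ≤ N₁) (hN₂ : 2 ≤ N₂)
    (hx : ∀ i, 1 ≤ i → i < N₁ → x i < x (i+1))
    (hy : ∀ j, 1 ≤ j → j < N₂ → y j < y (j+1))
    (hg : GridOK N₁ N₂ x y L g)
    {i j : ℕ} (hi1 : 1 ≤ i) (hi2 : i ≤ N₁) (hj1 : 1 ≤ j) (hj2 : j ≤ N₂) :
    uPL N₁ N₂ x y g (x i) (y j) = g i j := by
  obtain ⟨i', hi'1, hi'2, hpl, hpr, hieq⟩ :
      ∃ i', 1 ≤ i' ∧ i' ≤ N₁ - 1 ∧ x i' ≤ x i ∧ x i ≤ x (i'+1) ∧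
        (x i = x i' ∧ i = i' ∨ x i = x (i'+1) ∧ i = i' + 1) := by
    rcases Nat.lt_or_ge i N₁ with hi | hi
    · exact ⟨i, hi1, by omega, le_rfl, (hx i hi1 hi).le, Or.inl ⟨rfl, rfl⟩⟩
    · have hie : i = N₁ := by omega
      have hE : N₁ - 1 + 1 = N₁ := by omega
      refine ⟨N₁ - 1, by omega, le_rfl, ?_, ?_, Or.inr ⟨?_, by omega⟩⟩
      · rw [hie, ← hE]; exact (hx (N₁-1) (by omega) (by omega)).le
      · rw [hie, hE]
      · rw [hie, hE]
  obtain ⟨j', hj'1, hj'2, hql, hqr, hjeq⟩ :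
      ∃ j', 1 ≤ j' ∧ j' ≤ N₂ - 1 ∧ y j' ≤ y j ∧ y j ≤ y (j'+1) ∧
        (y j = y j' ∧ j = j' ∨ y j = y (j'+1) ∧ j = j' + 1) := by
    rcases Nat.lt_or_ge j N₂ with hj | hj
    · exact ⟨j, hj1, by omega, le_rfl, (hy j hj1 hj).le, Or.inl ⟨rfl, rfl⟩⟩
    · have hje : j = N₂ := by omega
      have hE : N₂ - 1 + 1 = N₂ := by omega
      refine ⟨N₂ - 1, by omega, le_rfl, ?_, ?_, Or.inr ⟨?_, by omega⟩⟩
      · rw [hje, ← hE]; exact (hy (N₂-1) (by omega) (by omega)).le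
      · rw [hje, hE]
      · rw [hje, hE]
  have hdx : 0 < x (i'+1) - x i' := by have := hx i' hi'1 (by omega); linarith
  have hdy : 0 < y (j'+1) - y j' := by have := hy j' hj'1 (by omega); linarith
  have hD := hg.2.2 i' j' hi'1 (by omega) hj'1 (by omega)
  rw [uPL_closedCell hN₁ hN₂ hx hy hg hi'1 hi'2 hj'1 hj'2 hpl hpr hql hqr]
  rcases hieq with ⟨hxe, hie⟩ | ⟨hxe, hie⟩ <;> rcases hjeq with ⟨hye, hje⟩ | ⟨hye, hje⟩ <;>
    rw [hxe, hye, hie, hje]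
  · exact cellM_corner00 hdx hdy hD
  · exact cellM_corner01 hdx hdy hD
  · exact cellM_corner10 hdx hdy hD
  · exact cellM_corner11 hdx hdy hD

/-- on the located cell, the PLA lies between the extreme corner values. -/
lemma v_between (hN₁ : 2 ≤ N₁) (hN₂ : 2 ≤ N₂)
    (hx : ∀ i, 1 ≤ i → i < N₁ → x i < x (i+1))
    (hy : ∀ j, 1 ≤ j → j < N₂ → y j < y (j+1))
    (hg : GridOK N₁ N₂ x y L g) (hL : 0 ≤ L)
    (hp1 : x 1 ≤ p) (hp2 : p ≤ x N₁) (hq1 : y 1 ≤ q) (hq2 : q ≤ y N₂) :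
    ∃ i j, 1 ≤ i ∧ i ≤ N₁ - 1 ∧ 1 ≤ j ∧ j ≤ N₂ - 1 ∧
      x i ≤ p ∧ p ≤ x (i+1) ∧ y j ≤ q ∧ q ≤ y (j+1) ∧
      g i j ≤ uPL N₁ N₂ x y g p q ∧ uPL N₁ N₂ x y g p q ≤ g (i+1) (j+1) := by
  obtain ⟨i, hi1, hi2, hmi⟩ := exists_memX N₁ hN₁ hx hp1 hp2
  obtain ⟨j, hj1, hj2, hmj⟩ := exists_memX N₂ hN₂ hy hq1 hq2
  obtain ⟨ha, hb⟩ := memX_le hmi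
  obtain ⟨hc, hd⟩ := memX_le hmj
  have hdx : 0 < x (i+1) - x i := by have := hx i hi1 (by omega); linarith
  have hdy : 0 < y (j+1) - y j := by have := hy j hj1 (by omega); linarith
  have hD := hg.2.2 i j hi1 (by omega) hj1 (by omega)
  obtain ⟨hAB, hEC, hBA, hCE⟩ := gridx hg hi1 hi2 hj1 hj2 hN₁
  obtain ⟨hBC, hAE, hCB, hEA⟩ := gridy hg hi1 hi2 hj1 hj2 hN₂
  refine ⟨i, j, hi1, hi2, hj1, hj2, ha, hb, hc, hd, ?_, ?_⟩
  · rw [uPL_closedCell hN₁ hN₂ hx hy hg hi1 hi2 hj1 hj2 ha hb hc hd]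
    calc g i j = cellM x y g i j (x i) (y j) := (cellM_corner00 hdx hdy hD).symm
      _ ≤ cellM x y g i j p (y j) := (cellM_x hL hdx hdy hAB hEC hBA hCE ha).1
      _ ≤ cellM x y g i j p q := (cellM_y hL hdx hdy hBC hAE hCB hEA hc).1
  · rw [uPL_closedCell hN₁ hN₂ hx hy hg hi1 hi2 hj1 hj2 ha hb hc hd]
    calc cellM x y g i j p q ≤ cellM x y g i j (x (i+1)) q :=
        (cellM_x hL hdx hdy hAB hEC hBA hCE hb).1
      _ ≤ cellM x y g i j (x (i+1)) (y (j+1)) := (cellM_y hL hdx hdy hBC hAE hCB hEA hd).1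
      _ = g (i+1) (j+1) := cellM_corner11 hdx hdy hD

/-- the PLA only depends on the grid values with indices in range. -/
lemma uPL_congr (hN₁ : 2 ≤ N₁) (hN₂ : 2 ≤ N₂) {g' : ℕ → ℕ → ℝ}
    (h : ∀ i j, 1 ≤ i → i ≤ N₁ → 1 ≤ j → j ≤ N₂ → g i j = g' i j) :
    uPL N₁ N₂ x y g p q = uPL N₁ N₂ x y g' p q := by
  unfold uPL
  refine Finset.sum_congr rfl fun i hi => Finset.sum_congr rfl fun j hj => ?_
  obtain ⟨hi1, hi2⟩ := Finset.mem_Icc.mp hi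
  obtain ⟨hj1, hj2⟩ := Finset.mem_Icc.mp hj
  have e00 := h i j hi1 (by omega) hj1 (by omega)
  have e10 := h (i+1) j (by omega) (by omega) hj1 (by omega)
  have e01 := h i (j+1) hi1 (by omega) (by omega) (by omega)
  have e11 := h (i+1) (j+1) (by omega) (by omega) (by omega) (by omega)
  simp only [u1l, u1u, e00, e10, e01, e11]

end global2
section package
variable {N₁ N₂ M : ℕ} {x y : ℕ → ℝ} {u : ℝ → ℝ → ℝ} {L p q : ℝ}
  {a : ℕ → ℕ → ℕ → ℝ} {c : ℕ → ℝ}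

lemma xmem (hx : ∀ i, 1 ≤ i → i < N₁ → x i < x (i+1)) {i : ℕ} (h1 : 1 ≤ i) (h2 : i ≤ N₁) :
    x i ∈ Set.Icc (x 1) (x N₁) :=
  ⟨x_le_x hx le_rfl h1 h2, x_le_x hx h1 h2 le_rfl⟩

lemma memU_gridOK (hN₁ : 2 ≤ N₁) (hN₂ : 2 ≤ N₂)
    (hx : ∀ i, 1 ≤ i → i < N₁ → x i < x (i+1))
    (hy : ∀ j, 1 ≤ j → j < N₂ → y j < y (j+1))
    (hu : memU N₁ N₂ x y L u) :
    GridOK N₁ N₂ x y L (fun i j => u (x i) (y j)) := by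
  obtain ⟨hcont, hmono, hrange, h00, h11, hcons, hlip⟩ := hu
  refine ⟨fun i j hi1 hi2 hj1 hj2 => ?_, fun i j hi1 hi2 hj1 hj2 => ?_,
    fun i j hi1 hi2 hj1 hj2 => ?_⟩
  · have hm1 := xmem hx hi1 (by omega)
    have hm2 := xmem hx (i := i+1) (by omega) (by omega)
    have hm3 := xmem hy hj1 hj2
    constructor
    · have := hmono (x i) (x (i+1)) (y j) (y j) hm1 hm2 hm3 hm3 (hx i hi1 hi2).le le_rfl
      linarith
    · have h := hlip (x (i+1)) (x i) (y j) (y j) hm2 hm1 hm3 hm3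
      rw [sub_self, abs_zero, add_zero,
        abs_of_nonneg (a := x (i+1) - x i) (by linarith [hx i hi1 hi2])] at h
      exact le_trans (le_abs_self _) h
  · have hm1 := xmem hy hj1 (by omega)
    have hm2 := xmem hy (i := j+1) (by omega) (by omega)
    have hm3 := xmem hx hi1 hi2
    constructor
    · have := hmono (x i) (x i) (y j) (y (j+1)) hm3 hm3 hm1 hm2 le_rfl (hy j hj1 hj2).le
      linarith
    · have h := hlip (x i) (x i) (y (j+1)) (y j) hm3 hm3 hm2 hm1
      rw [sub_self, abs_zero, zero_add,
        abs_of_nonneg (a := y (j+1) - y j) (by linarith [hy j hj1 hj2])] at h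
      exact le_trans (le_abs_self _) h
  · exact hcons (x i) (x (i+1)) (y j) (y (j+1)) (xmem hx hi1 (by omega)).1
      (hx i hi1 hi2).le (xmem hx (i := i+1) (by omega) (by omega)).2
      (xmem hy hj1 (by omega)).1 (hy j hj1 hj2).le (xmem hy (i := j+1) (by omega) (by omega)).2

lemma v_cont {g : ℕ → ℕ → ℝ} (hN₁ : 2 ≤ N₁) (hN₂ : 2 ≤ N₂)
    (hx : ∀ i, 1 ≤ i → i < N₁ → x i < x (i+1))
    (hy : ∀ j, 1 ≤ j → j < N₂ → y j < y (j+1))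
    (hg : GridOK N₁ N₂ x y L g) (hL : 0 ≤ L) :
    ContinuousOn (fun pq : ℝ × ℝ => uPL N₁ N₂ x y g pq.1 pq.2)
      (Set.Icc (x 1) (x N₁) ×ˢ Set.Icc (y 1) (y N₂)) := by
  apply LipschitzOnWith.continuousOn (K := Real.toNNReal (2*L))
  apply LipschitzOnWith.of_dist_le_mul
  intro w hw z hz
  obtain ⟨hw1, hw2⟩ := Set.mem_prod.mp hw
  obtain ⟨hz1, hz2⟩ := Set.mem_prod.mp hz
  have key := v_lip2 (p := w.1) (q := w.2) (p' := z.1) (q' := z.2) hN₁ hN₂ hx hy hg hL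
    hw1.1 hw1.2 hz1.1 hz1.2 hw2.1 hw2.2 hz2.1 hz2.2
  rw [Real.dist_eq, Prod.dist_eq, Real.dist_eq, Real.dist_eq,
    Real.coe_toNNReal _ (by positivity)]
  have h1 : |w.1 - z.1| ≤ max |w.1 - z.1| |w.2 - z.2| := le_max_left _ _
  have h2 : |w.2 - z.2| ≤ max |w.1 - z.1| |w.2 - z.2| := le_max_right _ _
  nlinarith [key, mul_le_mul_of_nonneg_left h1 hL, mul_le_mul_of_nonneg_left h2 hL]

lemma PLA_memUNc (hN₁ : 2 ≤ N₁) (hN₂ : 2 ≤ N₂)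
    (hx : ∀ i, 1 ≤ i → i < N₁ → x i < x (i+1))
    (hy : ∀ j, 1 ≤ j → j < N₂ → y j < y (j+1))
    (hL : 0 ≤ L) (hu : memUc N₁ N₂ M x y L a c u) :
    memUNc N₁ N₂ M x y L a c (fun p q => uPL N₁ N₂ x y (fun i j => u (x i) (y j)) p q) := by
  set g : ℕ → ℕ → ℝ := fun i j => u (x i) (y j) with hgdef
  have hg : GridOK N₁ N₂ x y L g := memU_gridOK hN₁ hN₂ hx hy hu.1
  have hgrid : ∀ i j, 1 ≤ i → i ≤ N₁ → 1 ≤ j → j ≤ N₂ →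
      uPL N₁ N₂ x y g (x i) (y j) = u (x i) (y j) :=
    fun i j hi1 hi2 hj1 hj2 => v_grid hN₁ hN₂ hx hy hg hi1 hi2 hj1 hj2
  have h00 : uPL N₁ N₂ x y g (x 1) (y 1) = 0 := by
    rw [hgrid 1 1 le_rfl (by omega) le_rfl (by omega)]; exact hu.1.2.2.2.1
  have h11 : uPL N₁ N₂ x y g (x N₁) (y N₂) = 1 := by
    rw [hgrid N₁ N₂ (by omega) le_rfl (by omega) le_rfl]; exact hu.1.2.2.2.2.1
  refine ⟨⟨⟨v_cont hN₁ hN₂ hx hy hg hL, ?_, ?_, h00, h11, ?_, ?_⟩, ?_⟩, ?_⟩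
  · exact fun p p' q q' hp hp' hq hq' hpp hqq =>
      v_mono2 hN₁ hN₂ hx hy hg hL hp.1 hpp hp'.2 hq.1 hqq hq'.2
  · intro p hp q hq
    constructor
    · rw [← h00]
      exact v_mono2 hN₁ hN₂ hx hy hg hL le_rfl hp.1 hp.2 le_rfl hq.1 hq.2
    · rw [← h11]
      exact v_mono2 hN₁ hN₂ hx hy hg hL hp.1 hp.2 le_rfl hq.1 hq.2 le_rfl
  · exact fun a' b' c' d' h1 h2 h3 h4 h5 h6 =>
      v_submod_glob hN₁ hN₂ hx hy hg h1 h2 h3 h4 h5 h6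
  · exact fun p p' q q' hp hp' hq hq' =>
      v_lip2 hN₁ hN₂ hx hy hg hL hp.1 hp.2 hp'.1 hp'.2 hq.1 hq.2 hq'.1 hq'.2
  · intro l hl
    have e : ∑ i ∈ Finset.Icc 1 N₁, ∑ j ∈ Finset.Icc 1 N₂,
        a l i j * uPL N₁ N₂ x y g (x i) (y j) =
        ∑ i ∈ Finset.Icc 1 N₁, ∑ j ∈ Finset.Icc 1 N₂, a l i j * u (x i) (y j) := by
      refine Finset.sum_congr rfl fun i hi => Finset.sum_congr rfl fun j hj => ?_
      obtain ⟨hi1, hi2⟩ := Finset.mem_Icc.mp hi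
      obtain ⟨hj1, hj2⟩ := Finset.mem_Icc.mp hj
      rw [hgrid i j hi1 hi2 hj1 hj2]
    rw [e]
    exact hu.2 l hl
  · intro p hp q hq
    exact uPL_congr hN₁ hN₂ fun i j hi1 hi2 hj1 hj2 => (hgrid i j hi1 hi2 hj1 hj2).symm

lemma PLA_close (hN₁ : 2 ≤ N₁) (hN₂ : 2 ≤ N₂)
    (hx : ∀ i, 1 ≤ i → i < N₁ → x i < x (i+1))
    (hy : ∀ j, 1 ≤ j → j < N₂ → y j < y (j+1))
    (hL : 0 ≤ L) (hu : memU N₁ N₂ x y L u)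
    (hp1 : x 1 ≤ p) (hp2 : p ≤ x N₁) (hq1 : y 1 ≤ q) (hq2 : q ≤ y N₂) :
    ∃ i j, 1 ≤ i ∧ i ≤ N₁ - 1 ∧ 1 ≤ j ∧ j ≤ N₂ - 1 ∧
      |uPL N₁ N₂ x y (fun i j => u (x i) (y j)) p q - u p q| ≤
        L * ((x (i+1) - x i) + (y (j+1) - y j)) := by
  set g : ℕ → ℕ → ℝ := fun i j => u (x i) (y j) with hgdef
  have hg : GridOK N₁ N₂ x y L g := memU_gridOK hN₁ hN₂ hx hy hu
  obtain ⟨i, j, hi1, hi2, hj1, hj2, ha, hb, hc, hd, hlow, hhigh⟩ :=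
    v_between hN₁ hN₂ hx hy hg hL hp1 hp2 hq1 hq2
  refine ⟨i, j, hi1, hi2, hj1, hj2, ?_⟩
  have hlip := hu.2.2.2.2.2.2
  have hmp : p ∈ Set.Icc (x 1) (x N₁) := ⟨hp1, hp2⟩
  have hmq : q ∈ Set.Icc (y 1) (y N₂) := ⟨hq1, hq2⟩
  have hup : |u (x (i+1)) (y (j+1)) - u p q| ≤ L * (|x (i+1) - p| + |y (j+1) - q|) :=
    hlip _ _ _ _ (xmem hx (by omega) (by omega)) hmp (xmem hy (by omega) (by omega)) hmq
  have hdn : |u p q - u (x i) (y j)| ≤ L * (|p - x i| + |q - y j|) :=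
    hlip _ _ _ _ hmp (xmem hx hi1 (by omega)) hmq (xmem hy hj1 (by omega))
  rw [abs_of_nonneg (a := x (i+1) - p) (by linarith),
    abs_of_nonneg (a := y (j+1) - q) (by linarith)] at hup
  rw [abs_of_nonneg (a := p - x i) (by linarith),
    abs_of_nonneg (a := q - y j) (by linarith)] at hdn
  have key1 : L * ((x (i+1) - p) + (y (j+1) - q)) ≤ L * ((x (i+1) - x i) + (y (j+1) - y j)) :=
    mul_le_mul_of_nonneg_left (by linarith) hL
  have key2 : L * ((p - x i) + (q - y j)) ≤ L * ((x (i+1) - x i) + (y (j+1) - y j)) :=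
    mul_le_mul_of_nonneg_left (by linarith) hL
  rw [abs_le]
  constructor
  · have := (abs_le.mp hdn).2
    simp only [hgdef] at hlow
    linarith
  · have := (abs_le.mp hup).2
    simp only [hgdef] at hhigh
    linarith

end package

/-- Error bound on the optimal value of the approximate bi-attribute UPRO problem in the
simple-`ψ` case: `|ϑ − ϑ_N| ≤ 3L(β₁ + β₂)` (the instance of Theorem 5.2(i) in the Example
following Theorem 5.2). -/
theorem theorem52i_optimal_value_error_bound
    (N₁ N₂ M K : ℕ) (hN₁ : 2 ≤ N₁) (hN₂ : 2 ≤ N₂) (hK : 0 < K)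
    (x y : ℕ → ℝ)
    (hx : ∀ i, 1 ≤ i → i < N₁ → x i < x (i + 1))
    (hy : ∀ j, 1 ≤ j → j < N₂ → y j < y (j + 1))
    (L : ℝ) (hL : 0 < L)
    (a : ℕ → ℕ → ℕ → ℝ) (c : ℕ → ℝ)
    (Z : Type*) [Nonempty Z]
    (prob : Fin K → ℝ) (hprob : ∀ k, 0 ≤ prob k) (hprobsum : ∑ k, prob k = 1)
    (f : Fin K → Z → ℝ × ℝ)
    (hf : ∀ k z, (f k z).1 ∈ Set.Icc (x 1) (x N₁) ∧ (f k z).2 ∈ Set.Icc (y 1) (y N₂))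
    (hUNne : ∃ u : ℝ → ℝ → ℝ, memUNc N₁ N₂ M x y L a c u) :
    let β₁ := (Finset.Icc 1 (N₁ - 1)).sup' (Finset.nonempty_Icc.mpr (by omega))
      (fun i => x (i + 1) - x i)
    let β₂ := (Finset.Icc 1 (N₂ - 1)).sup' (Finset.nonempty_Icc.mpr (by omega))
      (fun j => y (j + 1) - y j)
    |(⨆ z : Z, ⨅ u : {u : ℝ → ℝ → ℝ // memUc N₁ N₂ M x y L a c u},
        ∑ k, prob k * u.1 (f k z).1 (f k z).2)
      - (⨆ z : Z, ⨅ u : {u : ℝ → ℝ → ℝ // memUNc N₁ N₂ M x y L a c u},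
        ∑ k, prob k * u.1 (f k z).1 (f k z).2)|
      ≤ 3 * L * (β₁ + β₂) := by
  intro β₁ β₂
  have hβ1 : ∀ i, 1 ≤ i → i ≤ N₁ - 1 → x (i + 1) - x i ≤ β₁ := fun i h1 h2 =>
    Finset.le_sup' (fun i => x (i + 1) - x i) (Finset.mem_Icc.mpr ⟨h1, h2⟩)
  have hβ2 : ∀ j, 1 ≤ j → j ≤ N₂ - 1 → y (j + 1) - y j ≤ β₂ := fun j h1 h2 =>
    Finset.le_sup' (fun j => y (j + 1) - y j) (Finset.mem_Icc.mpr ⟨h1, h2⟩)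
  have hβ1pos : 0 ≤ β₁ := le_trans (by linarith [hx 1 le_rfl (by omega)]) (hβ1 1 le_rfl (by omega))
  have hβ2pos : 0 ≤ β₂ := le_trans (by linarith [hy 1 le_rfl (by omega)]) (hβ2 1 le_rfl (by omega))
  set C := L * (β₁ + β₂) with hCdef
  have hC0 : 0 ≤ C := by positivity
  obtain ⟨u₀, hu₀⟩ := hUNne
  haveI hne2 : Nonempty {u : ℝ → ℝ → ℝ // memUNc N₁ N₂ M x y L a c u} := ⟨⟨u₀, hu₀⟩⟩
  haveI hne1 : Nonempty {u : ℝ → ℝ → ℝ // memUc N₁ N₂ M x y L a c u} := ⟨⟨u₀, hu₀.1⟩⟩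
  -- values of admissible utilities lie in [0,1]
  have hval : ∀ w : ℝ → ℝ → ℝ, memU N₁ N₂ x y L w → ∀ z : Z,
      0 ≤ ∑ k, prob k * w (f k z).1 (f k z).2 ∧ ∑ k, prob k * w (f k z).1 (f k z).2 ≤ 1 := by
    intro w hw z
    have hterm : ∀ k, w (f k z).1 (f k z).2 ∈ Set.Icc (0:ℝ) 1 := fun k =>
      hw.2.2.1 _ (hf k z).1 _ (hf k z).2
    constructor
    · exact Finset.sum_nonneg fun k _ => mul_nonneg (hprob k) (hterm k).1
    · calc ∑ k, prob k * w (f k z).1 (f k z).2 ≤ ∑ k, prob k :=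
          Finset.sum_le_sum fun k _ => by
            have := (hterm k).2
            nlinarith [hprob k]
        _ = 1 := hprobsum
  -- uniform closeness of the PLA
  have happrox : ∀ w : ℝ → ℝ → ℝ, memU N₁ N₂ x y L w → ∀ p q : ℝ,
      x 1 ≤ p → p ≤ x N₁ → y 1 ≤ q → q ≤ y N₂ →
      |uPL N₁ N₂ x y (fun i j => w (x i) (y j)) p q - w p q| ≤ C := by
    intro w hw p q h1 h2 h3 h4
    obtain ⟨i, j, hi1, hi2, hj1, hj2, hb⟩ := PLA_close hN₁ hN₂ hx hy hL.le hw h1 h2 h3 h4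
    refine hb.trans ?_
    rw [hCdef]
    have := hβ1 i hi1 hi2
    have := hβ2 j hj1 hj2
    nlinarith
  set F : Z → {u : ℝ → ℝ → ℝ // memUc N₁ N₂ M x y L a c u} → ℝ :=
    fun z u => ∑ k, prob k * u.1 (f k z).1 (f k z).2 with hFdef
  set G : Z → {u : ℝ → ℝ → ℝ // memUNc N₁ N₂ M x y L a c u} → ℝ :=
    fun z u => ∑ k, prob k * u.1 (f k z).1 (f k z).2 with hGdef
  have hbdd1 : ∀ z, BddBelow (Set.range (F z)) := fun z =>
    ⟨0, by rintro _ ⟨u, rfl⟩; exact (hval u.1 u.2.1 z).1⟩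
  have hbdd2 : ∀ z, BddBelow (Set.range (G z)) := fun z =>
    ⟨0, by rintro _ ⟨u, rfl⟩; exact (hval u.1 u.2.1.1 z).1⟩
  have hI1ub : ∀ z, ⨅ u, F z u ≤ 1 := fun z =>
    le_trans (ciInf_le (hbdd1 z) ⟨u₀, hu₀.1⟩) (hval u₀ hu₀.1.1 z).2
  have hI2ub : ∀ z, ⨅ u, G z u ≤ 1 := fun z =>
    le_trans (ciInf_le (hbdd2 z) ⟨u₀, hu₀⟩) (hval u₀ hu₀.1.1 z).2
  have h1 : ∀ z, ⨅ u, F z u ≤ ⨅ u, G z u := fun z =>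
    le_ciInf fun w => ciInf_le (hbdd1 z) ⟨w.1, w.2.1⟩
  have h2 : ∀ z, ⨅ u, G z u ≤ (⨅ u, F z u) + C := by
    intro z
    have key : (⨅ u, G z u) - C ≤ ⨅ u, F z u := by
      apply le_ciInf
      intro s
      set w : ℝ → ℝ → ℝ := fun p q => uPL N₁ N₂ x y (fun i j => s.1 (x i) (y j)) p q with hwdef
      have hw : memUNc N₁ N₂ M x y L a c w := PLA_memUNc hN₁ hN₂ hx hy hL.le s.2
      have hstep : G z ⟨w, hw⟩ ≤ F z s + C := by
        have hsum : ∀ k : Fin K, prob k * w (f k z).1 (f k z).2 ≤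
            prob k * (s.1 (f k z).1 (f k z).2 + C) := by
          intro k
          have hcl := happrox s.1 s.2.1 (f k z).1 (f k z).2 (hf k z).1.1 (hf k z).1.2
            (hf k z).2.1 (hf k z).2.2
          have := (abs_le.mp hcl).2
          have hpk := hprob k
          nlinarith
        calc G z ⟨w, hw⟩ ≤ ∑ k, prob k * (s.1 (f k z).1 (f k z).2 + C) :=
            Finset.sum_le_sum fun k _ => hsum k
          _ = F z s + (∑ k, prob k) * C := by
            rw [hFdef]
            simp only [mul_add, Finset.sum_add_distrib, Finset.sum_mul]
          _ = F z s + C := by rw [hprobsum, one_mul]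
      have hinf := ciInf_le (hbdd2 z) (⟨w, hw⟩ :
        {u : ℝ → ℝ → ℝ // memUNc N₁ N₂ M x y L a c u})
      linarith
    linarith
  have hbddA : BddAbove (Set.range fun z : Z => ⨅ u, F z u) :=
    ⟨1, by rintro _ ⟨z, rfl⟩; exact hI1ub z⟩
  have hbddB : BddAbove (Set.range fun z : Z => ⨅ u, G z u) :=
    ⟨1, by rintro _ ⟨z, rfl⟩; exact hI2ub z⟩
  have hAB : (⨆ z : Z, ⨅ u, F z u) ≤ ⨆ z : Z, ⨅ u, G z u :=
    ciSup_le fun z => le_trans (h1 z) (le_ciSup hbddB z)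
  have hBA : (⨆ z : Z, ⨅ u, G z u) ≤ (⨆ z : Z, ⨅ u, F z u) + C :=
    ciSup_le fun z => le_trans (h2 z) (add_le_add_left (le_ciSup hbddA z) C)
  rw [abs_le]
  constructor
  · have : C ≤ 3 * L * (β₁ + β₂) := by nlinarith
    linarith
  · have : (0:ℝ) ≤ 3 * L * (β₁ + β₂) := by positivity
    linarith

end
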